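/- With v_1, v_2, v_3 defined by the recursive Mex algorithm, the three sets {v_1(n) : n ≥ 1}, {v_2(n) : n ≥ 1}, {v_3(n) : n ≥ 1} are pairwise disjoint and their union is all of ℕ≥1. -/
import Mathlib


/-- Minimum excluded value of a set of natural numbers. -/
noncomputable def mex (S : Set ℕ) : ℕ := sInf {m : ℕ | m ∉ S}

/-- Coordinates of a set of triples. -/
def coords (G : Set (ℕ × ℕ × ℕ)) : Set ℕ :=
  {k | ∃ x ∈ G, k = x.1 ∨ k = x.2.1 ∨ k = x.2.2}

/-- Pairwise coordinate differences of a set of triples. -/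
def diffs (G : Set (ℕ × ℕ × ℕ)) : Set ℕ :=
  {d | ∃ x ∈ G, d = x.2.1 - x.1 ∨ d = x.2.2 - x.2.1 ∨ d = x.2.2 - x.1}

/-- One step of the Mex algorithm: the next P-position. -/
noncomputable def step (G : Set (ℕ × ℕ × ℕ)) : ℕ × ℕ × ℕ :=
  let F := coords G
  let D := diffs G
  let a := mex F
  let b := mex ((fun d => a + d) '' D ∪ Set.Icc 1 a ∪ F)
  let c := mex ((fun d => b + d) '' D ∪ Set.Icc 1 b ∪ F)
  (a, b, c)

/-- The sets `G_n` of P-positions computed by the Mex algorithm. -/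
noncomputable def Gset : ℕ → Set (ℕ × ℕ × ℕ)
  | 0 => {(0, 0, 0)}
  | n + 1 => Gset n ∪ {step (Gset n)}

/-- The `n`-th P-position `(v_1(n), v_2(n), v_3(n))`. -/
noncomputable def v : ℕ → ℕ × ℕ × ℕ
  | 0 => (0, 0, 0)
  | n + 1 => step (Gset n)

noncomputable def v1 (n : ℕ) : ℕ := (v n).1
noncomputable def v2 (n : ℕ) : ℕ := (v n).2.1
noncomputable def v3 (n : ℕ) : ℕ := (v n).2.2

/-- `F_n`: the set of coordinates of elements of `G_n`. -/
noncomputable def Fset (n : ℕ) : Set ℕ := coords (Gset n)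

/-- `D_n`: the set of pairwise coordinate differences over `G_n`. -/
noncomputable def Dset (n : ℕ) : Set ℕ := diffs (Gset n)

-- mex basics
lemma mex_not_mem {S : Set ℕ} (h : S.Finite) : mex S ∉ S :=
  Nat.sInf_mem (h.infinite_compl.nonempty)

lemma mem_of_lt_mex {S : Set ℕ} {m : ℕ} (h : m < mex S) : m ∈ S := by
  by_contra hm
  exact absurd (Nat.sInf_le hm) (not_le.2 h)

lemma mex_le_mex {S T : Set ℕ} (hT : T.Finite) (hST : S ⊆ T) : mex S ≤ mex T := by
  by_contra h
  push_neg at h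
  exact mex_not_mem hT (hST (mem_of_lt_mex h))

-- finiteness
lemma coords_finite {G : Set (ℕ × ℕ × ℕ)} (h : G.Finite) : (coords G).Finite := by
  apply Set.Finite.subset (((h.image Prod.fst).union (h.image (fun x => x.2.1))).union
    (h.image (fun x => x.2.2)))
  rintro k ⟨x, hx, h1 | h2 | h3⟩
  · exact Or.inl (Or.inl ⟨x, hx, h1.symm⟩)
  · exact Or.inl (Or.inr ⟨x, hx, h2.symm⟩)
  · exact Or.inr ⟨x, hx, h3.symm⟩

lemma diffs_finite {G : Set (ℕ × ℕ × ℕ)} (h : G.Finite) : (diffs G).Finite := by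
  apply Set.Finite.subset (((h.image (fun x => x.2.1 - x.1)).union
    (h.image (fun x => x.2.2 - x.2.1))).union (h.image (fun x => x.2.2 - x.1)))
  rintro k ⟨x, hx, h1 | h2 | h3⟩
  · exact Or.inl (Or.inl ⟨x, hx, h1.symm⟩)
  · exact Or.inl (Or.inr ⟨x, hx, h2.symm⟩)
  · exact Or.inr ⟨x, hx, h3.symm⟩

lemma Gset_finite (n : ℕ) : (Gset n).Finite := by
  induction n with
  | zero => exact Set.finite_singleton _
  | succ n ih => exact ih.union (Set.finite_singleton _)

lemma Fset_finite (n : ℕ) : (Fset n).Finite := coords_finite (Gset_finite n)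
lemma Dset_finite (n : ℕ) : (Dset n).Finite := diffs_finite (Gset_finite n)

-- unfolding
lemma v1_succ (n : ℕ) : v1 (n+1) = mex (Fset n) := rfl
lemma v2_succ (n : ℕ) :
    v2 (n+1) = mex ((fun d => v1 (n+1) + d) '' Dset n ∪ Set.Icc 1 (v1 (n+1)) ∪ Fset n) := rfl
lemma v3_succ (n : ℕ) :
    v3 (n+1) = mex ((fun d => v2 (n+1) + d) '' Dset n ∪ Set.Icc 1 (v2 (n+1)) ∪ Fset n) := rfl

lemma set2_finite (n : ℕ) :
    ((fun d => v1 (n+1) + d) '' Dset n ∪ Set.Icc 1 (v1 (n+1)) ∪ Fset n).Finite :=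
  (((Dset_finite n).image _).union (Set.finite_Icc _ _)).union (Fset_finite n)

lemma set3_finite (n : ℕ) :
    ((fun d => v2 (n+1) + d) '' Dset n ∪ Set.Icc 1 (v2 (n+1)) ∪ Fset n).Finite :=
  (((Dset_finite n).image _).union (Set.finite_Icc _ _)).union (Fset_finite n)

lemma v1_notMem (n : ℕ) : v1 (n+1) ∉ Fset n := mex_not_mem (Fset_finite n)
lemma v2_notMem (n : ℕ) : v2 (n+1) ∉ Fset n := fun h =>
  mex_not_mem (set2_finite n) (Or.inr h)
lemma v3_notMem (n : ℕ) : v3 (n+1) ∉ Fset n := fun h =>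
  mex_not_mem (set3_finite n) (Or.inr h)

lemma zero_mem_F (n : ℕ) : 0 ∈ Fset n := by
  have : (0,0,0) ∈ Gset n := by
    induction n with
    | zero => rfl
    | succ n ih => exact Or.inl ih
  exact ⟨(0,0,0), this, Or.inl rfl⟩

lemma v1_pos (n : ℕ) : 1 ≤ v1 (n+1) :=
  Nat.pos_of_ne_zero fun h => v1_notMem n (h ▸ zero_mem_F n)
lemma v2_pos (n : ℕ) : 1 ≤ v2 (n+1) :=
  Nat.pos_of_ne_zero fun h => v2_notMem n (h ▸ zero_mem_F n)
lemma v3_pos (n : ℕ) : 1 ≤ v3 (n+1) :=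
  Nat.pos_of_ne_zero fun h => v3_notMem n (h ▸ zero_mem_F n)

lemma v1_lt_v2 (n : ℕ) : v1 (n+1) < v2 (n+1) := by
  have h : v2 (n+1) ∉ Set.Icc 1 (v1 (n+1)) := fun h =>
    mex_not_mem (set2_finite n) (Or.inl (Or.inr h))
  rcases lt_or_ge (v1 (n+1)) (v2 (n+1)) with h' | h'
  · exact h'
  · exact absurd ⟨v2_pos n, h'⟩ h

lemma v2_lt_v3 (n : ℕ) : v2 (n+1) < v3 (n+1) := by
  have h : v3 (n+1) ∉ Set.Icc 1 (v2 (n+1)) := fun h =>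
    mex_not_mem (set3_finite n) (Or.inl (Or.inr h))
  rcases lt_or_ge (v2 (n+1)) (v3 (n+1)) with h' | h'
  · exact h'
  · exact absurd ⟨v3_pos n, h'⟩ h

lemma Fset_succ (n : ℕ) :
    Fset (n+1) = Fset n ∪ {v1 (n+1), v2 (n+1), v3 (n+1)} := by
  have hv : step (Gset n) = (v1 (n+1), v2 (n+1), v3 (n+1)) := rfl
  ext k
  constructor
  · rintro ⟨x, hx | hx, h⟩
    · exact Or.inl ⟨x, hx, h⟩
    · simp only [Set.mem_singleton_iff] at hx
      subst hx
      rw [hv] at h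
      rcases h with h | h | h <;> simp [h]
  · rintro (⟨x, hx, h⟩ | h)
    · exact ⟨x, Or.inl hx, h⟩
    · refine ⟨step (Gset n), Or.inr rfl, ?_⟩
      rw [hv]
      rcases h with h | h | h <;> simp_all

lemma Fset_mono {m n : ℕ} (h : m ≤ n) : Fset m ⊆ Fset n := by
  induction n with
  | zero => simp [Nat.le_zero.1 h]
  | succ n ih =>
    rcases Nat.lt_or_ge m (n+1) with h' | h'
    · intro k hk
      rw [Fset_succ]
      exact Or.inl (ih (Nat.lt_succ_iff.1 h') hk)
    · have : m = n + 1 := le_antisymm h h'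
      subst this; exact subset_rfl

lemma vi_mem_succ (n : ℕ) : v1 (n+1) ∈ Fset (n+1) ∧ v2 (n+1) ∈ Fset (n+1) ∧
    v3 (n+1) ∈ Fset (n+1) := by
  rw [Fset_succ]
  exact ⟨Or.inr (Or.inl rfl), Or.inr (Or.inr (Or.inl rfl)), Or.inr (Or.inr (Or.inr rfl))⟩

lemma mex_F_lt (n : ℕ) : mex (Fset n) < mex (Fset (n+1)) := by
  have h1 : mex (Fset n) ≤ mex (Fset (n+1)) :=
    mex_le_mex (Fset_finite (n+1)) (Fset_mono (Nat.le_succ n))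
  rcases h1.lt_or_eq with h | h
  · exact h
  · exfalso
    have : mex (Fset (n+1)) ∈ Fset (n+1) := h ▸ (vi_mem_succ n).1
    exact mex_not_mem (Fset_finite (n+1)) this

lemma lt_mex_F (n : ℕ) : n < mex (Fset n) := by
  induction n with
  | zero => exact Nat.pos_of_ne_zero fun h => mex_not_mem (Fset_finite 0) (by rw [h]; exact zero_mem_F 0)
  | succ n ih => exact lt_of_le_of_lt ih (mex_F_lt n)

lemma Fset_zero : Fset 0 = {0} := by
  ext k
  constructor
  · rintro ⟨x, hx, h⟩
    have : x = (0,0,0) := hx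
    subst this
    rcases h with h | h | h <;> simp [h]
  · rintro rfl
    exact zero_mem_F 0

lemma mem_Fset_exists {k n : ℕ} (hk : k ∈ Fset n) (h0 : k ≠ 0) :
    ∃ m, 1 ≤ m ∧ (k = v1 m ∨ k = v2 m ∨ k = v3 m) := by
  induction n with
  | zero => rw [Fset_zero] at hk; exact absurd hk h0
  | succ n ih =>
    rw [Fset_succ] at hk
    rcases hk with hk | hk | hk | hk
    · exact ih hk
    · exact ⟨n+1, Nat.succ_le_succ (Nat.zero_le n), Or.inl hk⟩
    · exact ⟨n+1, Nat.succ_le_succ (Nat.zero_le n), Or.inr (Or.inl hk)⟩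
    · exact ⟨n+1, Nat.succ_le_succ (Nat.zero_le n), Or.inr (Or.inr hk)⟩

-- generic distinctness helper
lemma ne_of_mem_notMem {x y : ℕ} {m n : ℕ}
    (hxm : x ∈ Fset (m+1)) (hxm' : x ∉ Fset m)
    (hyn : y ∈ Fset (n+1)) (hyn' : y ∉ Fset n)
    (heq : m = n → x ≠ y) : x ≠ y := by
  rcases lt_trichotomy m n with h | h | h
  · intro he
    exact hyn' (he ▸ Fset_mono h hxm)
  · exact heq h
  · intro he
    exact hxm' (he ▸ Fset_mono h hyn)

theorem stmt7 :
    Disjoint (v1 '' {n | 1 ≤ n}) (v2 '' {n | 1 ≤ n}) ∧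
    Disjoint (v1 '' {n | 1 ≤ n}) (v3 '' {n | 1 ≤ n}) ∧
    Disjoint (v2 '' {n | 1 ≤ n}) (v3 '' {n | 1 ≤ n}) ∧
    v1 '' {n | 1 ≤ n} ∪ v2 '' {n | 1 ≤ n} ∪ v3 '' {n | 1 ≤ n} = {k : ℕ | 1 ≤ k} := by
  have h12 : ∀ m n : ℕ, v1 (m+1) ≠ v2 (n+1) := fun m n =>
    ne_of_mem_notMem (vi_mem_succ m).1 (v1_notMem m) (vi_mem_succ n).2.1 (v2_notMem n)
      (fun h => by subst h; exact (v1_lt_v2 m).ne)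
  have h13 : ∀ m n : ℕ, v1 (m+1) ≠ v3 (n+1) := fun m n =>
    ne_of_mem_notMem (vi_mem_succ m).1 (v1_notMem m) (vi_mem_succ n).2.2 (v3_notMem n)
      (fun h => by subst h; exact ((v1_lt_v2 m).trans (v2_lt_v3 m)).ne)
  have h23 : ∀ m n : ℕ, v2 (m+1) ≠ v3 (n+1) := fun m n =>
    ne_of_mem_notMem (vi_mem_succ m).2.1 (v2_notMem m) (vi_mem_succ n).2.2 (v3_notMem n)
      (fun h => by subst h; exact (v2_lt_v3 m).ne)
  refine ⟨?_, ?_, ?_, ?_⟩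
  · rw [Set.disjoint_left]
    rintro x ⟨m, hm, rfl⟩ ⟨n, hn, he⟩
    match m, hm, n, hn with
    | m'+1, _, n'+1, _ => exact h12 m' n' he.symm
  · rw [Set.disjoint_left]
    rintro x ⟨m, hm, rfl⟩ ⟨n, hn, he⟩
    match m, hm, n, hn with
    | m'+1, _, n'+1, _ => exact h13 m' n' he.symm
  · rw [Set.disjoint_left]
    rintro x ⟨m, hm, rfl⟩ ⟨n, hn, he⟩
    match m, hm, n, hn with
    | m'+1, _, n'+1, _ => exact h23 m' n' he.symm
  · ext k
    simp only [Set.mem_union, Set.mem_image, Set.mem_setOf_eq]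
    constructor
    · rintro ((⟨m, hm, rfl⟩ | ⟨m, hm, rfl⟩) | ⟨m, hm, rfl⟩)
      · match m, hm with | m'+1, _ => exact v1_pos m'
      · match m, hm with | m'+1, _ => exact v2_pos m'
      · match m, hm with | m'+1, _ => exact v3_pos m'
    · intro hk
      have hkF : k ∈ Fset k := mem_of_lt_mex (lt_mex_F k)
      obtain ⟨m, hm, h | h | h⟩ := mem_Fset_exists hkF (by omega)
      · exact Or.inl (Or.inl ⟨m, hm, h.symm⟩)
      · exact Or.inl (Or.inr ⟨m, hm, h.symm⟩)
      · exact Or.inr ⟨m, hm, h.symm⟩
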